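/- Fix a measurable countable partition ξ = {B_k}_{k≥1} of X with 0 < μ(B_k) < ∞ for all k. For a quadratic stochastic operator Q on L¹ define 𝔼Q on ℓ¹ by (𝔼Q(x,y))_i := ∫_{B_i} Q( Σ_k (x_k/μ(B_k))·1_{B_k} , Σ_l (y_l/μ(B_l))·1_{B_l} ) dμ. Then for any two quadratic stochastic operators Q₁, Q₂ on L¹, sup{ ‖𝔼Q₁(x,x) − 𝔼Q₂(x,x)‖_{ℓ¹} : x ∈ ℓ¹, x ≥ 0, ‖x‖_{ℓ¹} = 1 } ≤ sup_{f∈𝒟} ‖Q₁(f,f) − Q₂(f,f)‖₁; in particular the map Q ↦ 𝔼Q is continuous for the metric d_u. -/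

import Mathlib

open MeasureTheory Filter Topology

noncomputable section

/-- The set of densities in `L¹(μ)`. -/
def Density {X : Type*} [MeasurableSpace X] (μ : Measure X) : Set (Lp ℝ 1 μ) :=
  {f | 0 ≤ f ∧ ‖f‖ = 1}

/-- `Q : L¹ × L¹ → L¹` is a quadratic stochastic operator: bilinear, positivity preserving,
symmetric and `‖Q(f,g)‖₁ = ‖f‖₁ ‖g‖₁` for `f, g ≥ 0`. -/
structure IsQSO {X : Type*} [MeasurableSpace X] (μ : Measure X)
    (Q : Lp ℝ 1 μ → Lp ℝ 1 μ → Lp ℝ 1 μ) : Prop where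
  add_left : ∀ f f' g, Q (f + f') g = Q f g + Q f' g
  smul_left : ∀ (c : ℝ) f g, Q (c • f) g = c • Q f g
  add_right : ∀ f g g', Q f (g + g') = Q f g + Q f g'
  smul_right : ∀ (c : ℝ) f g, Q f (c • g) = c • Q f g
  nonneg : ∀ f g, 0 ≤ f → 0 ≤ g → 0 ≤ Q f g
  symm : ∀ f g, Q f g = Q g f
  norm_mul : ∀ f g, 0 ≤ f → 0 ≤ g → ‖Q f g‖ = ‖f‖ * ‖g‖

/-- The quadratic map `ℚ(f) = Q(f,f)`. -/
def QQ {X : Type*} [MeasurableSpace X] {μ : Measure X}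
    (Q : Lp ℝ 1 μ → Lp ℝ 1 μ → Lp ℝ 1 μ) (f : Lp ℝ 1 μ) : Lp ℝ 1 μ := Q f f

/-- The iterates `ℚⁿ`. -/
def Qiter {X : Type*} [MeasurableSpace X] {μ : Measure X}
    (Q : Lp ℝ 1 μ → Lp ℝ 1 μ → Lp ℝ 1 μ) (n : ℕ) : Lp ℝ 1 μ → Lp ℝ 1 μ := (QQ Q)^[n]

/-- `Pchain Q f n = P_f^{[0,n]}`, the nonhomogeneous Markov chain associated with `Q`
and the density `f`, i.e. `P_f^{[0,0]} = id` and
`P_f^{[0,n+1]}(g) = Q(ℚⁿ(f), P_f^{[0,n]}(g))`. -/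
def Pchain {X : Type*} [MeasurableSpace X] {μ : Measure X}
    (Q : Lp ℝ 1 μ → Lp ℝ 1 μ → Lp ℝ 1 μ) (f : Lp ℝ 1 μ) :
    ℕ → Lp ℝ 1 μ → Lp ℝ 1 μ
  | 0 => id
  | n + 1 => fun g => Q (Qiter Q n f) (Pchain Q f n g)

/-- The metric `d_u(Q₁,Q₂) = sup_{f ∈ 𝒟} ‖ℚ₁(f) - ℚ₂(f)‖₁`. -/
def du {X : Type*} [MeasurableSpace X] (μ : Measure X)
    (Q₁ Q₂ : Lp ℝ 1 μ → Lp ℝ 1 μ → Lp ℝ 1 μ) : ℝ :=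
  ⨆ f : Density μ, ‖Q₁ f f - Q₂ f f‖

/-- The metric `d̂_u(Q₁,Q₂) = sup_{f,g ∈ 𝒟} ‖Q₁(f,g) - Q₂(f,g)‖₁`. -/
def dhat {X : Type*} [MeasurableSpace X] (μ : Measure X)
    (Q₁ Q₂ : Lp ℝ 1 μ → Lp ℝ 1 μ → Lp ℝ 1 μ) : ℝ :=
  ⨆ f : Density μ, ⨆ g : Density μ, ‖Q₁ f g - Q₂ f g‖

/-- `supDiff μ Q n = sup_{f,g,h ∈ 𝒟} ‖P_f^{[0,n]}(g) - P_f^{[0,n]}(h)‖₁`. -/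
def supDiff {X : Type*} [MeasurableSpace X] (μ : Measure X)
    (Q : Lp ℝ 1 μ → Lp ℝ 1 μ → Lp ℝ 1 μ) (n : ℕ) : ℝ :=
  ⨆ f : Density μ, ⨆ g : Density μ, ⨆ h : Density μ,
    ‖Pchain Q f n g - Pchain Q f n h‖

/-- `Q` is norm quasi-mixing. -/
def NormQuasiMixing {X : Type*} [MeasurableSpace X] (μ : Measure X)
    (Q : Lp ℝ 1 μ → Lp ℝ 1 μ → Lp ℝ 1 μ) : Prop :=
  Tendsto (fun n => supDiff μ Q n) atTop (𝓝 0)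

/-- `Q` is norm mixing (uniformly asymptotically stable). -/
def NormMixing {X : Type*} [MeasurableSpace X] (μ : Measure X)
    (Q : Lp ℝ 1 μ → Lp ℝ 1 μ → Lp ℝ 1 μ) : Prop :=
  ∃ f ∈ Density μ,
    Tendsto (fun n => ⨆ g : Density μ, ‖Qiter Q n g - f‖) atTop (𝓝 0)

end

/-- Fix a measurable countable partition `ξ = {B_k}` of `X` consistent with `μ`
(`0 < μ(B_k) < ∞`). Let `S x = Σ_k (x_k/μ(B_k))·1_{B_k} ∈ L¹` (characterized a.e.) and for a
QSO `Q` let `𝔼Q(x,y)_i = ∫_{B_i} Q(S x, S y) dμ`. Then for any two QSOs `Q₁, Q₂` and any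
`x ∈ ℓ¹` with `x ≥ 0`, `‖x‖_{ℓ¹} = 1`, one has
`‖𝔼Q₁(x,x) − 𝔼Q₂(x,x)‖_{ℓ¹} ≤ sup_{f∈𝒟} ‖ℚ₁(f) − ℚ₂(f)‖₁ = d_u(Q₁,Q₂)`;
in particular `Q ↦ 𝔼Q` is continuous for `d_u`. -/
theorem ellOne_correspondence_continuous {X : Type*} [MeasurableSpace X]
    (μ : Measure X) [SigmaFinite μ]
    (ξ : ℕ → Set X) (hmeas : ∀ k, MeasurableSet (ξ k))
    (hdisj : Pairwise (Function.onFun Disjoint ξ))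
    (hcover : (⋃ k, ξ k) = Set.univ)
    (hpos : ∀ k, 0 < μ (ξ k)) (hfin : ∀ k, μ (ξ k) < ⊤)
    (S : (ℕ → ℝ) → Lp ℝ 1 μ)
    (hS : ∀ x : ℕ → ℝ, Summable (fun k => |x k|) →
      (S x : X → ℝ) =ᵐ[μ]
        fun a => ∑' k, (ξ k).indicator (fun _ => x k / (μ (ξ k)).toReal) a)
    (Q₁ Q₂ : Lp ℝ 1 μ → Lp ℝ 1 μ → Lp ℝ 1 μ)
    (h₁ : IsQSO μ Q₁) (h₂ : IsQSO μ Q₂)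
    (x : ℕ → ℝ) (hx0 : ∀ k, 0 ≤ x k)
    (hxs : Summable (fun k => |x k|)) (hx1 : (∑' k, |x k|) = 1) :
    (∑' i, |(∫ a in ξ i, (Q₁ (S x) (S x) : Lp ℝ 1 μ) a ∂μ) -
             ∫ a in ξ i, (Q₂ (S x) (S x) : Lp ℝ 1 μ) a ∂μ|)
      ≤ du μ Q₁ Q₂ := by
  classical
  have htR : ∀ k, 0 < (μ (ξ k)).toReal := fun k =>
    ENNReal.toReal_pos (hpos k).ne' (hfin k).ne
  have hSx := hS x hxs
  set φ : X → ℝ := fun a => ∑' k, (ξ k).indicator (fun _ => x k / (μ (ξ k)).toReal) a with hφ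
  have hφ0 : ∀ a, 0 ≤ φ a := fun a => tsum_nonneg fun k =>
    Set.indicator_nonneg (fun _ _ => div_nonneg (hx0 k) (htR k).le) a
  -- S x is nonnegative
  have hSx0 : (0 : Lp ℝ 1 μ) ≤ S x := by
    rw [← MeasureTheory.Lp.coeFn_nonneg]
    filter_upwards [hSx] with a ha
    rw [ha]; exact hφ0 a
  -- summability facts
  have hxeq : ∀ k, x k = |x k| := fun k => (abs_of_nonneg (hx0 k)).symm
  have hxsum : Summable x := hxs.congr fun k => (hxeq k).symm
  have hx1' : (∑' k, x k) = 1 := by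
    rw [tsum_congr hxeq]; exact hx1
  have hmeasI : ∀ k, AEStronglyMeasurable
      ((ξ k).indicator (fun _ => x k / (μ (ξ k)).toReal)) μ := fun k =>
    (StronglyMeasurable.indicator stronglyMeasurable_const (hmeas k)).aestronglyMeasurable
  have hlint : ∀ k, ∫⁻ a, ‖(ξ k).indicator (fun _ => x k / (μ (ξ k)).toReal) a‖₊ ∂μ
      = ENNReal.ofReal (x k) := by
    intro k
    have h1 : ∀ a, ((‖(ξ k).indicator (fun _ => x k / (μ (ξ k)).toReal) a‖₊ : ENNReal))
        = (ξ k).indicator (fun _ => ENNReal.ofReal (x k / (μ (ξ k)).toReal)) a := by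
      intro a
      by_cases ha : a ∈ ξ k
      · simp only [Set.indicator_of_mem ha]
        exact Real.enorm_eq_ofReal (div_nonneg (hx0 k) (htR k).le)
      · simp [Set.indicator_of_notMem ha]
    simp only [h1]
    rw [lintegral_indicator_const (hmeas k)]
    rw [ENNReal.ofReal_div_of_pos (htR k), ENNReal.ofReal_toReal (hfin k).ne,
      ENNReal.div_mul_cancel (hpos k).ne' (hfin k).ne]
  have hlint_sum : (∑' k, ∫⁻ a, ‖(ξ k).indicator (fun _ => x k / (μ (ξ k)).toReal) a‖₊ ∂μ) ≠ ⊤ := by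
    simp only [hlint]
    rw [← ENNReal.ofReal_tsum_of_nonneg hx0 hxsum, hx1']
    exact ENNReal.ofReal_ne_top
  have hintI : ∀ k, ∫ a, (ξ k).indicator (fun _ => x k / (μ (ξ k)).toReal) a ∂μ = x k := by
    intro k
    rw [integral_indicator_const _ (hmeas k), smul_eq_mul]
    rw [mul_div_assoc', mul_comm, mul_div_assoc, measureReal_def, div_self (htR k).ne', mul_one]
  have hφint : ∫ a, φ a ∂μ = 1 := by
    rw [hφ]
    rw [MeasureTheory.integral_tsum hmeasI hlint_sum]
    simp only [hintI]
    exact hx1'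
  -- ‖S x‖ = 1
  have hSxnorm : ‖S x‖ = 1 := by
    rw [MeasureTheory.L1.norm_eq_integral_norm]
    rw [← hφint]
    refine integral_congr_ae ?_
    filter_upwards [hSx] with a ha
    rw [ha, Real.norm_eq_abs, abs_of_nonneg (hφ0 a)]
  have hmem : S x ∈ Density μ := ⟨hSx0, hSxnorm⟩
  -- the difference g
  set g : Lp ℝ 1 μ := Q₁ (S x) (S x) - Q₂ (S x) (S x) with hg
  have hgint : Integrable (g : X → ℝ) μ := L1.integrable_coeFn g
  have hgae : (g : X → ℝ) =ᵐ[μ]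
      fun a => (Q₁ (S x) (S x) : X → ℝ) a - (Q₂ (S x) (S x) : X → ℝ) a :=
    MeasureTheory.Lp.coeFn_sub _ _
  have heq : ∀ i, (∫ a in ξ i, (Q₁ (S x) (S x) : Lp ℝ 1 μ) a ∂μ) -
      (∫ a in ξ i, (Q₂ (S x) (S x) : Lp ℝ 1 μ) a ∂μ) = ∫ a in ξ i, (g : X → ℝ) a ∂μ := by
    intro i
    rw [← integral_sub ((L1.integrable_coeFn _).integrableOn)
      ((L1.integrable_coeFn _).integrableOn)]
    refine setIntegral_congr_ae (hmeas i) ?_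
    filter_upwards [hgae] with a ha _
    exact ha.symm
  -- sum of set integrals of |g|
  have habs : IntegrableOn (fun a => |(g : X → ℝ) a|) (⋃ i, ξ i) μ := by
    rw [hcover]
    exact (hgint.abs).integrableOn
  have hHS : HasSum (fun i => ∫ a in ξ i, |(g : X → ℝ) a| ∂μ)
      (∫ a in ⋃ i, ξ i, |(g : X → ℝ) a| ∂μ) :=
    MeasureTheory.hasSum_integral_iUnion hmeas hdisj habs
  have hval : (∫ a in ⋃ i, ξ i, |(g : X → ℝ) a| ∂μ) = ‖g‖ := by
    rw [hcover, Measure.restrict_univ, MeasureTheory.L1.norm_eq_integral_norm]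
    simp [Real.norm_eq_abs]
  have hterm : ∀ i, |∫ a in ξ i, (g : X → ℝ) a ∂μ| ≤ ∫ a in ξ i, |(g : X → ℝ) a| ∂μ :=
    fun i => by
      simpa [Real.norm_eq_abs] using
        norm_integral_le_integral_norm (μ := μ.restrict (ξ i)) (fun a => (g : X → ℝ) a)
  -- ‖g‖ ≤ du
  have hbdd : BddAbove (Set.range fun f : Density μ => ‖Q₁ f f - Q₂ f f‖) := by
    refine ⟨2, ?_⟩
    rintro r ⟨⟨f, hf0, hf1⟩, rfl⟩
    calc ‖Q₁ f f - Q₂ f f‖ ≤ ‖Q₁ f f‖ + ‖Q₂ f f‖ := norm_sub_le _ _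
      _ = 2 := by
        rw [h₁.norm_mul f f hf0 hf0, h₂.norm_mul f f hf0 hf0, hf1]; ring
  have hdu : ‖g‖ ≤ du μ Q₁ Q₂ :=
    le_ciSup hbdd (⟨S x, hmem⟩ : Density μ)
  -- put it all together
  calc (∑' i, |(∫ a in ξ i, (Q₁ (S x) (S x) : Lp ℝ 1 μ) a ∂μ) -
             ∫ a in ξ i, (Q₂ (S x) (S x) : Lp ℝ 1 μ) a ∂μ|)
      = ∑' i, |∫ a in ξ i, (g : X → ℝ) a ∂μ| := by
        refine tsum_congr fun i => ?_
        rw [heq i]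
    _ ≤ ∑' i, ∫ a in ξ i, |(g : X → ℝ) a| ∂μ := by
        refine Summable.tsum_le_tsum hterm ?_ hHS.summable
        exact Summable.of_nonneg_of_le (fun i => abs_nonneg _) hterm hHS.summable
    _ = ‖g‖ := by rw [hHS.tsum_eq, hval]
    _ ≤ du μ Q₁ Q₂ := hdu
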